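/- For all positive integers L and integers a, the identity ∑_{k≥0} W_{L,k}(q) · [2k choose k−a]_q = q^{2a^2} · [2L choose L−2a]_q holds, where W_{L,k}(q) = ∑_{m=0}^{L} q^{k^2+(m+k)^2} [L choose m]_q [L−m choose 2k]_q. -/

import Mathlib

open LaurentPolynomial Finset

noncomputable section

/-- The Gaussian binomial coefficient `[m choose n]_q` as a polynomial in `q`,
defined via the `q`-Pascal recurrence; it equals `(q;q)_m/((q;q)_n (q;q)_{m-n})`
for `0 ≤ n ≤ m`. -/
def gb : ℕ → ℕ → Polynomial ℤ
  | _, 0 => 1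
  | 0, _ + 1 => 0
  | m + 1, n + 1 => gb m n + Polynomial.X ^ (n + 1) * gb m (n + 1)

/-- `[m choose n]_q` with integer indices, zero unless `0 ≤ n ≤ m`,
viewed as a Laurent polynomial in `q`. -/
def qbin (m n : ℤ) : LaurentPolynomial ℤ :=
  if 0 ≤ n ∧ n ≤ m then (gb m.toNat n.toNat).toLaurent else 0

/-- A Laurent polynomial is a polynomial in `q` with nonnegative coefficients. -/
def IsNonneg (x : LaurentPolynomial ℤ) : Prop :=
  ∃ P : Polynomial ℤ, (∀ n, 0 ≤ P.coeff n) ∧ P.toLaurent = x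

/-- The triangular number `T(j) = j(j+1)/2`. -/
def tri (j : ℤ) : ℤ := j * (j + 1) / 2

/-- `W_{L,k}(q) = ∑_{m=0}^{L} q^{k²+(m+k)²} [L choose m]_q [L-m choose 2k]_q`. -/
def Wpoly (L k : ℕ) : LaurentPolynomial ℤ :=
  ∑ m ∈ Finset.range (L + 1),
    T ((k : ℤ) ^ 2 + ((m : ℤ) + k) ^ 2) * (gb L m).toLaurent * (gb (L - m) (2 * k)).toLaurent

lemma gb_zero : ∀ m n, m < n → gb m n = 0
  | 0, _+1, _ => rfl
  | m+1, n+1, h => by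
      show gb m n + Polynomial.X ^ (n+1) * gb m (n+1) = 0
      rw [gb_zero m n (by omega), gb_zero m (n+1) (by omega)]; ring

lemma gb_succ_succ (m n : ℕ) : gb (m+1) (n+1) = gb m n + Polynomial.X ^ (n+1) * gb m (n+1) := rfl

lemma gb_zero_right (m : ℕ) : gb m 0 = 1 := by cases m <;> rfl

def poch (n : ℕ) : Polynomial ℤ := ∏ i ∈ range n, (1 - Polynomial.X ^ (i+1))

lemma poch_ne_zero (n : ℕ) : poch n ≠ 0 := by
  apply Finset.prod_ne_zero_iff.2
  intro i _
  intro h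
  have := congrArg (fun p => Polynomial.coeff p 0) h
  simp [Polynomial.coeff_X_pow] at this

lemma gb_mul_poch : ∀ m n, n ≤ m → gb m n * (poch n * poch (m - n)) = poch m
  | m, 0, _ => by simp [gb_zero_right, poch]
  | m+1, n+1, h => by
      rw [gb_succ_succ, add_mul]
      have hnm : n ≤ m := by omega
      have e1 : poch (n+1) = poch n * (1 - Polynomial.X ^ (n+1)) := Finset.prod_range_succ _ _
      have e2 : m + 1 - (n+1) = m - n := by omega
      rw [e2]
      rcases Nat.lt_or_ge n m with hlt | hge
      · have e3 : poch (m - n) = poch (m - (n+1)) * (1 - Polynomial.X ^ (m - n)) := by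
          have : m - n = (m - (n+1)) + 1 := by omega
          rw [this, poch, Finset.prod_range_succ]
          rw [show m - (n+1) + 1 = m - n from this.symm]
          rfl
        have ih1 := gb_mul_poch m n hnm
        have ih2 := gb_mul_poch m (n+1) hlt
        have epow : Polynomial.X ^ (n+1) * Polynomial.X ^ (m-n) = (Polynomial.X:Polynomial ℤ) ^ (m+1) := by
          rw [← pow_add]; congr 1; omega
        calc gb m n * (poch (n+1) * poch (m-n)) + Polynomial.X ^ (n+1) * gb m (n+1) * (poch (n+1) * poch (m-n))
            = (gb m n * (poch n * poch (m-n))) * (1 - Polynomial.X ^ (n+1))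
              + Polynomial.X ^ (n+1) * ((gb m (n+1) * (poch (n+1) * poch (m - (n+1)))) * (1 - Polynomial.X ^ (m-n))) := by
              rw [e1, e3]; ring
          _ = poch m * (1 - Polynomial.X ^ (n+1)) + Polynomial.X ^ (n+1) * (poch m * (1 - Polynomial.X ^ (m-n))) := by rw [ih1, ih2]
          _ = poch m * (1 - Polynomial.X^(n+1) * Polynomial.X^(m-n)) := by ring
          _ = poch m * (1 - Polynomial.X ^ (m+1)) := by rw [epow]
          _ = poch (m+1) := (Finset.prod_range_succ _ _).symm
      · have hnm' : n = m := by omega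
        subst hnm'
        rw [gb_zero n (n+1) (by omega)]
        have : n - n = 0 := by omega
        rw [this]
        have ih1 := gb_mul_poch n n le_rfl
        rw [this] at ih1
        calc gb n n * (poch (n+1) * poch 0) + Polynomial.X ^ (n+1) * 0 * (poch (n+1) * poch 0)
            = (gb n n * (poch n * poch 0)) * (1 - Polynomial.X ^ (n+1)) := by rw [e1]; ring
          _ = poch n * (1 - Polynomial.X ^ (n+1)) := by rw [ih1]
          _ = poch (n+1) := (Finset.prod_range_succ _ _).symm

lemma gb_symm {m n : ℕ} (h : n ≤ m) : gb m n = gb m (m - n) := by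
  have h2 : m - n ≤ m := by omega
  have e1 := gb_mul_poch m n h
  have e2 := gb_mul_poch m (m-n) h2
  rw [show m - (m-n) = n by omega] at e2
  apply mul_right_cancel₀ (mul_ne_zero (poch_ne_zero n) (poch_ne_zero (m-n)))
  rw [e1, ← e2]; ring

lemma gb_trinomial {N c : ℕ} (d : ℕ) (h : c ≤ N) :
    gb N c * gb (N - c) d = gb N (c + d) * gb (c + d) c := by
  rcases le_or_gt (c + d) N with hcd | hcd
  · apply mul_right_cancel₀ (mul_ne_zero (poch_ne_zero c) (mul_ne_zero (poch_ne_zero d) (poch_ne_zero (N - (c+d)))))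
    have e1 := gb_mul_poch N c h
    have e2 := gb_mul_poch (N - c) d (by omega)
    rw [show N - c - d = N - (c + d) by omega] at e2
    have e3 := gb_mul_poch N (c + d) hcd
    have e4 := gb_mul_poch (c + d) c (by omega)
    rw [show c + d - c = d by omega] at e4
    have L : gb N c * gb (N-c) d * (poch c * (poch d * poch (N - (c+d)))) = poch N := by
      calc gb N c * gb (N-c) d * (poch c * (poch d * poch (N - (c+d))))
          = gb N c * (poch c * (gb (N-c) d * (poch d * poch (N - (c+d))))) := by ring
        _ = gb N c * (poch c * poch (N - c)) := by rw [e2]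
        _ = poch N := e1
    have R : gb N (c+d) * gb (c+d) c * (poch c * (poch d * poch (N - (c+d)))) = poch N := by
      calc gb N (c+d) * gb (c+d) c * (poch c * (poch d * poch (N - (c+d))))
          = gb N (c+d) * ((gb (c+d) c * (poch c * poch d)) * poch (N - (c+d))) := by ring
        _ = gb N (c+d) * (poch (c+d) * poch (N - (c+d))) := by rw [e4]
        _ = poch N := e3
    rw [L, R]
  · rw [gb_zero (N - c) d (by omega), gb_zero N (c + d) (by omega)]; ring

lemma gb_vandermonde (M : ℕ) : ∀ (N r : ℕ),
    gb (M + N) r = ∑ p ∈ Finset.HasAntidiagonal.antidiagonal r,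
      Polynomial.X ^ (p.2 * (M - p.1)) * gb M p.1 * gb N p.2 := by
  induction M with
  | zero =>
      intro N r
      rw [Finset.sum_eq_single (0, r)]
      · simp [gb_zero_right]
      · rintro ⟨i, j⟩ hp hne
        have hij : i + j = r := Finset.HasAntidiagonal.mem_antidiagonal.mp hp
        have hi : i ≠ 0 := by rintro rfl; simp at hij; subst hij; exact hne rfl
        rw [gb_zero 0 i (by omega)]; ring
      · intro h; exact absurd (Finset.HasAntidiagonal.mem_antidiagonal.mpr (by omega)) h
  | succ M ih =>
      intro N r
      match r with
      | 0 => simp [gb_zero_right]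
      | s + 1 =>
        have key : gb (M + 1 + N) (s+1) = gb (M + N) s + Polynomial.X ^ (s+1) * gb (M+N) (s+1) := by
          rw [show M + 1 + N = (M + N) + 1 by omega, gb_succ_succ]
        rw [key, ih N s, ih N (s+1)]
        rw [Finset.Nat.sum_antidiagonal_succ (f := fun p => Polynomial.X ^ (p.2 * (M + 1 - p.1)) * gb (M+1) p.1 * gb N p.2)]
        rw [Finset.mul_sum]
        rw [Finset.Nat.sum_antidiagonal_succ (f := fun p => Polynomial.X ^ (s+1) * (Polynomial.X ^ (p.2 * (M - p.1)) * gb M p.1 * gb N p.2))]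
        have hfirst : Polynomial.X ^ (s+1) * (Polynomial.X ^ ((s+1) * (M - 0)) * gb M 0 * gb N (s+1))
            = Polynomial.X ^ ((s+1) * (M + 1 - 0)) * gb (M+1) 0 * gb N (s+1) := by
          rw [gb_zero_right, gb_zero_right, Nat.sub_zero, Nat.sub_zero]
          rw [show (s+1) * (M+1) = (s+1) + (s+1)*M by ring, pow_add]
          ring
        rw [hfirst, add_left_comm]
        congr 1
        rw [← Finset.sum_add_distrib]
        apply Finset.sum_congr rfl
        rintro ⟨i, j⟩ hp
        have hij : i + j = s := Finset.HasAntidiagonal.mem_antidiagonal.mp hp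
        simp only
        rw [gb_succ_succ M i]
        rcases le_or_gt (i + 1) M with hiM | hiM
        · obtain ⟨d, hd⟩ : ∃ d, M - i = d + 1 := ⟨M - i - 1, by omega⟩
          have hd2 : M - (i + 1) = d := by omega
          have hd3 : M + 1 - (i + 1) = d + 1 := by omega
          rw [hd, hd2, hd3]
          rw [show (s+1 : ℕ) = i + j + 1 by omega]
          rw [show j * (d+1) = j * d + j by ring, show (i + j + 1 : ℕ) = (i+1) + j by ring]
          simp only [pow_add]
          ring
        · rw [gb_zero M (i+1) (by omega)]
          have hMi : M + 1 - (i+1) = 0 := by omega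
          have hMi2 : M - i = 0 := by omega
          rw [hMi, hMi2]
          ring

lemma gb_vq (M N A : ℕ) :
    ∑ k ∈ Finset.range (M+N+1), (if A ≤ k then
      Polynomial.X ^ (k^2 - A^2) * gb M (k+A) * gb N (k-A) else 0)
      = if 2*A ≤ M then gb (M+N) (M - 2*A) else 0 := by
  rcases le_or_gt (2*A) M with hAM | hAM
  · rw [if_pos hAM]
    rw [gb_vandermonde M N (M - 2*A)]
    rw [Finset.Nat.sum_antidiagonal_eq_sum_range_succ_mk]
    -- RHS = ∑ i ∈ range (M-2A+1), X^((M-2A-i)*(M-i)) * gb M i * gb N (M-2A-i)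
    have hsub : Finset.Icc A (M - A) ⊆ Finset.range (M+N+1) := by
      intro k hk
      rw [Finset.mem_Icc] at hk
      rw [Finset.mem_range]
      omega
    rw [← Finset.sum_subset hsub (by
      intro k hk hk2
      rw [Finset.mem_Icc] at hk2
      rcases le_or_gt A k with h1 | h1
      · rw [if_pos h1, gb_zero M (k+A) (by omega)]; ring
      · rw [if_neg (by omega)])]
    refine Finset.sum_nbij' (fun k => M - A - k) (fun i => M - A - i) ?_ ?_ ?_ ?_ ?_
    · intro k hk
      rw [Finset.mem_Icc] at hk
      rw [Finset.mem_range]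
      beta_reduce
      omega
    · intro i hi
      rw [Finset.mem_range] at hi
      rw [Finset.mem_Icc]
      beta_reduce
      omega
    · intro k hk
      rw [Finset.mem_Icc] at hk
      beta_reduce
      omega
    · intro i hi
      rw [Finset.mem_range] at hi
      beta_reduce
      omega
    · intro k hk
      rw [Finset.mem_Icc] at hk
      beta_reduce
      rw [if_pos hk.1]
      obtain ⟨b, rfl⟩ : ∃ b, k = A + b := ⟨k - A, by omega⟩
      have e1 : M - 2*A - (M - A - (A + b)) = b := by omega
      have e2 : M - (M - A - (A+b)) = A + (A + b) := by omega
      rw [e1, e2]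
      have e3 : (A+b)^2 - A^2 = b * (A + (A+b)) := by
        have : (A+b)^2 = A^2 + b * (A + (A+b)) := by ring
        rw [this, Nat.add_sub_cancel_left]
      rw [e3]
      have e4 : gb M (A + b + A) = gb M (M - A - (A + b)) := by
        rw [gb_symm (show A + b + A ≤ M by omega)]
        congr 1
        omega
      rw [show A + b - A = b by omega, ← e4]
  · rw [if_neg (by omega)]
    apply Finset.sum_eq_zero
    intro k hk
    rcases le_or_gt A k with h1 | h1
    · rw [if_pos h1, gb_zero M (k+A) (by omega)]; ring
    · rw [if_neg (by omega)]

lemma gb_main (L A : ℕ) :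
    ∑ k ∈ Finset.range (L+1),
      (∑ m ∈ Finset.range (L+1),
        Polynomial.X ^ (k^2+(m+k)^2) * gb L m * gb (L-m) (2*k)) * gb (2*k) (k+A)
      = Polynomial.X ^ (2*A^2) * gb (2*L) (L+2*A) := by
  classical
  set F : ℕ → ℕ → Polynomial ℤ := fun k v =>
    Polynomial.X ^ (k^2+(v-A)^2) * gb L v * gb v (k+A) * gb (L-v) (k-A) with hF
  set g : ℕ → Polynomial ℤ := fun v =>
    if 2*A ≤ v then Polynomial.X ^ ((v-A)^2+A^2) * gb L v * gb L (v-2*A) else 0 with hg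
  -- Step 0: RHS
  have step0 : Polynomial.X ^ (2*A^2) * gb (2*L) (L+2*A)
      = ∑ k ∈ Finset.range (2*L+1), (if A ≤ k then
          Polynomial.X ^ (k^2+A^2) * gb L (k+A) * gb L (k-A) else 0) := by
    have h1 : gb (2*L) (L+2*A) = if 2*A ≤ L then gb (2*L) (L - 2*A) else 0 := by
      rcases le_or_gt (2*A) L with h | h
      · rw [if_pos h, gb_symm (show L+2*A ≤ 2*L by omega), show 2*L - (L+2*A) = L - 2*A by omega]
      · rw [if_neg (by omega), gb_zero (2*L) (L+2*A) (by omega)]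
    have h2 := gb_vq L L A
    rw [show L + L = 2*L by omega] at h2
    rw [h1, ← h2, Finset.mul_sum]
    apply Finset.sum_congr rfl
    intro k _
    rcases le_or_gt A k with h1 | h1
    · rw [if_pos h1, if_pos h1]
      have hA2 : A^2 ≤ k^2 := Nat.pow_le_pow_left h1 2
      rw [show k^2+A^2 = 2*A^2 + (k^2 - A^2) by omega, pow_add]
      ring
    · rw [if_neg (by omega), if_neg (by omega), mul_zero]
  rw [step0]
  -- Step 1: termwise rewriting of LHS
  have step1 : ∀ k, (∑ m ∈ Finset.range (L+1),
        Polynomial.X ^ (k^2+(m+k)^2) * gb L m * gb (L-m) (2*k)) * gb (2*k) (k+A)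
      = if A ≤ k then ∑ m ∈ Finset.range (L+1), F k (m+k+A) else 0 := by
    intro k
    rcases le_or_gt A k with hAk | hAk
    · rw [if_pos hAk, Finset.sum_mul]
      apply Finset.sum_congr rfl
      intro m hm
      rw [Finset.mem_range] at hm
      have hmL : m ≤ L := by omega
      rcases le_or_gt (k+A) (L-m) with hkm | hkm
      · have t1 := gb_trinomial (N := L-m) (c := k+A) (k-A) hkm
        rw [show k+A+(k-A) = 2*k by omega] at t1
        have t2 := gb_trinomial (N := L) (c := m) (k+A) hmL
        have s1 : gb (m+(k+A)) m = gb (m+(k+A)) (k+A) := by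
          rw [gb_symm (show m ≤ m+(k+A) by omega), show m+(k+A)-m = k+A by omega]
        calc Polynomial.X ^ (k^2+(m+k)^2) * gb L m * gb (L-m) (2*k) * gb (2*k) (k+A)
            = Polynomial.X ^ (k^2+(m+k)^2) * gb L m * (gb (L-m) (2*k) * gb (2*k) (k+A)) := by ring
          _ = Polynomial.X ^ (k^2+(m+k)^2) * gb L m * (gb (L-m) (k+A) * gb (L-m-(k+A)) (k-A)) := by rw [← t1]
          _ = Polynomial.X ^ (k^2+(m+k)^2) * (gb L m * gb (L-m) (k+A)) * gb (L-m-(k+A)) (k-A) := by ring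
          _ = Polynomial.X ^ (k^2+(m+k)^2) * (gb L (m+(k+A)) * gb (m+(k+A)) m) * gb (L-m-(k+A)) (k-A) := by rw [t2]
          _ = F k (m+k+A) := by
              rw [s1, hF]
              beta_reduce
              rw [show m+k+A-A = m+k by omega, show L-(m+k+A) = L-m-(k+A) by omega,
                show m+(k+A) = m+k+A by omega]
              ring
      · rw [gb_zero (L-m) (2*k) (by omega), hF]
        beta_reduce
        rw [gb_zero L (m+k+A) (by omega)]
        ring
    · rw [if_neg (by omega), gb_zero (2*k) (k+A) (by omega), mul_zero]
  simp only [step1]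
  -- Step 2: reindex inner sum
  have step2 : ∀ k, A ≤ k → ∑ m ∈ Finset.range (L+1), F k (m+k+A)
      = ∑ v ∈ Finset.range (L+1), F k v := by
    intro k hAk
    have h1 : ∑ m ∈ Finset.range (L+1), F k (m+k+A)
        = ∑ v ∈ Finset.Ico (k+A) (k+A+(L+1)), F k v := by
      rw [Finset.sum_Ico_eq_sum_range, show k+A+(L+1)-(k+A) = L+1 by omega]
      apply Finset.sum_congr rfl
      intro m _
      congr 1
      omega
    rw [h1]
    have hz1 : ∀ v ∈ Finset.range (k+A+(L+1)), v ∉ Finset.Ico (k+A) (k+A+(L+1)) → F k v = 0 := by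
      intro v hv hv2
      rw [Finset.mem_range] at hv
      rw [Finset.mem_Ico] at hv2
      have : v < k + A := by omega
      rw [hF]
      beta_reduce
      rw [gb_zero v (k+A) (by omega)]
      ring
    have hz2 : ∀ v ∈ Finset.range (k+A+(L+1)), v ∉ Finset.range (L+1) → F k v = 0 := by
      intro v _ hv2
      rw [Finset.mem_range] at hv2
      rw [hF]
      beta_reduce
      rw [gb_zero L v (by omega)]
      ring
    rw [Finset.sum_subset (show Finset.Ico (k+A) (k+A+(L+1)) ⊆ Finset.range (k+A+(L+1)) by
        intro v hv; rw [Finset.mem_Ico] at hv; rw [Finset.mem_range]; omega) hz1,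
      Finset.sum_subset (show Finset.range (L+1) ⊆ Finset.range (k+A+(L+1)) by
        intro v hv; rw [Finset.mem_range] at hv ⊢; omega) hz2]
  -- use step2 inside the if
  have step2' : ∀ k, (if A ≤ k then ∑ m ∈ Finset.range (L+1), F k (m+k+A) else 0)
      = ∑ v ∈ Finset.range (L+1), (if A ≤ k then F k v else 0) := by
    intro k
    rcases le_or_gt A k with h | h
    · rw [if_pos h, step2 k h]
      apply Finset.sum_congr rfl
      intro v _
      rw [if_pos h]
    · rw [if_neg (by omega)]
      rw [Finset.sum_congr rfl (fun v _ => if_neg (by omega : ¬ A ≤ k)), Finset.sum_const_zero]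
  simp only [step2']
  rw [Finset.sum_comm]
  -- Step 4: inner VQ
  have step4 : ∀ v ∈ Finset.range (L+1),
      ∑ k ∈ Finset.range (L+1), (if A ≤ k then F k v else 0) = g v := by
    intro v hv
    rw [Finset.mem_range] at hv
    have hvL : v ≤ L := by omega
    have key : ∀ k, (if A ≤ k then F k v else 0)
        = Polynomial.X ^ ((v-A)^2+A^2) * gb L v *
          (if A ≤ k then Polynomial.X ^ (k^2-A^2) * gb v (k+A) * gb (L-v) (k-A) else 0) := by
      intro k
      rcases le_or_gt A k with h | h
      · rw [if_pos h, if_pos h, hF]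
        beta_reduce
        have hA2 : A^2 ≤ k^2 := Nat.pow_le_pow_left h 2
        rw [show k^2+(v-A)^2 = ((v-A)^2+A^2) + (k^2-A^2) by omega, pow_add]
        ring
      · rw [if_neg (by omega : ¬ A ≤ k), if_neg (by omega : ¬ A ≤ k), mul_zero]
    simp only [key]
    rw [← Finset.mul_sum]
    have h2 := gb_vq v (L-v) A
    rw [show v + (L-v) = L by omega] at h2
    rw [h2, hg]
    beta_reduce
    rcases le_or_gt (2*A) v with h | h
    · rw [if_pos h, if_pos h]
    · rw [if_neg (by omega : ¬ 2*A ≤ v), if_neg (by omega : ¬ 2*A ≤ v)]; ring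
  rw [Finset.sum_congr rfl step4]
  -- Step 5: final reindex
  have hRHS : ∀ k ∈ Finset.range (2*L+1),
      (if A ≤ k then Polynomial.X ^ (k^2+A^2) * gb L (k+A) * gb L (k-A) else 0) = g (A+k) := by
    intro k _
    rw [hg]
    beta_reduce
    rcases le_or_gt A k with h | h
    · rw [if_pos h, if_pos (by omega : 2*A ≤ A+k)]
      rw [show A+k-A = k by omega, show A+k-2*A = k-A by omega, show A+k = k+A by omega]
    · rw [if_neg (by omega : ¬ A ≤ k), if_neg (by omega : ¬ 2*A ≤ A+k)]
  rw [Finset.sum_congr rfl hRHS]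
  have h5 : ∑ k ∈ Finset.range (2*L+1), g (A+k) = ∑ v ∈ Finset.Ico A (A+(2*L+1)), g v := by
    rw [Finset.sum_Ico_eq_sum_range, show A+(2*L+1)-A = 2*L+1 by omega]
  rw [h5]
  have hz1 : ∀ v ∈ Finset.range (A+(2*L+1)), v ∉ Finset.range (L+1) → g v = 0 := by
    intro v _ hv2
    rw [Finset.mem_range] at hv2
    rw [hg]
    beta_reduce
    rcases le_or_gt (2*A) v with h | h
    · rw [if_pos h, gb_zero L v (by omega)]; ring
    · rw [if_neg (by omega : ¬ 2*A ≤ v)]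
  have hz2 : ∀ v ∈ Finset.range (A+(2*L+1)), v ∉ Finset.Ico A (A+(2*L+1)) → g v = 0 := by
    intro v hv hv2
    rw [Finset.mem_range] at hv
    rw [Finset.mem_Ico] at hv2
    rw [hg]
    beta_reduce
    rw [if_neg (by omega)]
  rw [Finset.sum_subset (show Finset.range (L+1) ⊆ Finset.range (A+(2*L+1)) by
      intro v hv; rw [Finset.mem_range] at hv ⊢; omega) hz1,
    Finset.sum_subset (show Finset.Ico A (A+(2*L+1)) ⊆ Finset.range (A+(2*L+1)) by
      intro v hv; rw [Finset.mem_Ico] at hv; rw [Finset.mem_range]; omega) hz2]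


lemma qbin_eq (n : ℕ) (c : ℤ) :
    qbin (2 * (n:ℤ)) ((n:ℤ) - c) = Polynomial.toLaurent (gb (2*n) (n + c.natAbs)) := by
  rcases le_or_gt 0 c with hc | hc
  · rcases le_or_gt c (n:ℤ) with hcn | hcn
    · rw [qbin, if_pos ⟨by omega, by omega⟩]
      have h1 : (2 * (n:ℤ)).toNat = 2 * n := by omega
      have h2 : ((n:ℤ) - c).toNat = n - c.natAbs := by omega
      rw [h1, h2]
      congr 1
      rw [gb_symm (show n - c.natAbs ≤ 2*n by omega)]
      congr 1
      omega
    · rw [qbin, if_neg (by omega)]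
      rw [gb_zero (2*n) (n + c.natAbs) (by omega), map_zero]
  · rcases le_or_gt (c.natAbs : ℤ) (n:ℤ) with hcn | hcn
    · rw [qbin, if_pos ⟨by omega, by omega⟩]
      have h1 : (2 * (n:ℤ)).toNat = 2 * n := by omega
      have h2 : ((n:ℤ) - c).toNat = n + c.natAbs := by omega
      rw [h1, h2]
    · rw [qbin, if_neg (by omega)]
      rw [gb_zero (2*n) (n + c.natAbs) (by omega), map_zero]

/-- Warnaar's transformation:
`∑_{k ≥ 0} W_{L,k}(q) [2k choose k-a]_q = q^{2a²} [2L choose L-2a]_q`. -/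
theorem warnaar_transformation (L : ℕ) (hL : 0 < L) (a : ℤ) :
    ∑ᶠ k : ℕ, Wpoly L k * qbin (2 * k) ((k : ℤ) - a) =
      T (2 * a ^ 2) * qbin (2 * L) ((L : ℤ) - 2 * a) := by
  classical
  set A := a.natAbs with hA
  have hWpoly : ∀ k : ℕ, Wpoly L k = Polynomial.toLaurent
      (∑ m ∈ Finset.range (L+1), Polynomial.X ^ (k^2+(m+k)^2) * gb L m * gb (L-m) (2*k)) := by
    intro k
    rw [Wpoly, map_sum]
    apply Finset.sum_congr rfl
    intro m _
    rw [map_mul, map_mul, Polynomial.toLaurent_X_pow]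
    have he : ((k:ℤ)^2 + ((m:ℤ)+(k:ℤ))^2) = ((k^2+(m+k)^2 : ℕ) : ℤ) := by push_cast; ring
    rw [he]
  have hW0 : ∀ k, L < k → Wpoly L k = 0 := by
    intro k hk
    rw [Wpoly]
    apply Finset.sum_eq_zero
    intro m hm
    rw [Finset.mem_range] at hm
    rw [gb_zero (L-m) (2*k) (by omega), map_zero, mul_zero]
  have hsupp : (Function.support fun k : ℕ => Wpoly L k * qbin (2*(k:ℤ)) ((k:ℤ) - a))
      ⊆ ↑(Finset.range (L+1)) := by
    intro k hk
    rw [Function.mem_support] at hk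
    by_contra hmem
    rw [Finset.mem_coe, Finset.mem_range] at hmem
    exact hk (by rw [hW0 k (by omega), zero_mul])
  rw [finsum_eq_sum_of_support_subset _ hsupp]
  calc ∑ k ∈ Finset.range (L+1), Wpoly L k * qbin (2*(k:ℤ)) ((k:ℤ) - a)
      = ∑ k ∈ Finset.range (L+1), Polynomial.toLaurent
          ((∑ m ∈ Finset.range (L+1),
            Polynomial.X ^ (k^2+(m+k)^2) * gb L m * gb (L-m) (2*k)) * gb (2*k) (k+A)) := by
        apply Finset.sum_congr rfl
        intro k _
        rw [hWpoly k, qbin_eq k a, ← map_mul]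
    _ = Polynomial.toLaurent (Polynomial.X ^ (2*A^2) * gb (2*L) (L+2*A)) := by
        rw [← map_sum, gb_main]
    _ = T (2*a^2) * qbin (2*(L:ℤ)) ((L:ℤ) - 2*a) := by
        rw [map_mul, Polynomial.toLaurent_X_pow, qbin_eq L (2*a)]
        congr 2
        · push_cast
          rw [Int.natAbs_sq]
        · rw [Int.natAbs_mul]
          rfl
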